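/- arXiv:1104.4523 — 2 statements merged into one kernel-verified Lean document; each statement's English description precedes it below -/
import Mathlib

section
/- Let R be a commutative ring, G a finite group, H ≤ G a subgroup of index d, and V an H-module over R which is free as an R-module. Give W := ⊗_{i=1}^{d} Sym_R(V) (tensor product over a set of coset representatives g₁H,…,g_dH) the tensor-induced G-action, permuting tensor factors according to left translation on G/H twisted by the H-action. Then there is a G-equivariant R-algebra isomorphism N_H^G Sym_R(V) := ⊗_{G/H} Sym_R(V) ≅ Sym_R(Ind_H^G V), where Ind_H^G V = R[G] ⊗_{R[H]} V. -/
noncomputable section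

open scoped TensorProduct

variable (R : Type*) [CommRing R]

/-- The relation on the tensor algebra whose ring quotient is the symmetric algebra. -/
inductive SymRel (V : Type*) [AddCommGroup V] [Module R V] :
    TensorAlgebra R V → TensorAlgebra R V → Prop
  | mul_comm (x y : V) : SymRel V
      (TensorAlgebra.ι R x * TensorAlgebra.ι R y)
      (TensorAlgebra.ι R y * TensorAlgebra.ι R x)

/-- The symmetric algebra `Sym_R(V)` of an `R`-module `V`. -/
abbrev MySym (V : Type*) [AddCommGroup V] [Module R V] := RingQuot (SymRel R V)

/-- The canonical linear map `V → Sym_R(V)`. -/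
def symι (V : Type*) [AddCommGroup V] [Module R V] : V →ₗ[R] MySym R V :=
  (RingQuot.mkAlgHom R (SymRel R V)).toLinearMap ∘ₗ TensorAlgebra.ι R

instance {V : Type*} [AddCommGroup V] [Module R V] : CommRing (MySym R V) where
  __ := (inferInstance : Ring (MySym R V))
  mul_comm a b := by
    obtain ⟨a, rfl⟩ := RingQuot.mkAlgHom_surjective R _ a
    obtain ⟨b, rfl⟩ := RingQuot.mkAlgHom_surjective R _ b
    induction a using TensorAlgebra.induction with
    | algebraMap r => simp [Algebra.commutes]
    | ι x =>
      induction b using TensorAlgebra.induction with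
      | algebraMap r => simp [Algebra.commutes]
      | ι y =>
        have := RingQuot.mkAlgHom_rel R (SymRel.mul_comm (R := R) y x)
        simpa [map_mul] using this.symm
      | mul a b ha hb =>
        simp only [map_mul] at *; rw [← mul_assoc, ha, mul_assoc, hb, ← mul_assoc]
      | add a b ha hb => simp only [map_add, mul_add, add_mul, ha, hb]
    | mul a b ha hb => simp only [map_mul] at *; rw [mul_assoc, hb, ← mul_assoc, ha, mul_assoc]
    | add a b ha hb => simp only [map_add, mul_add, add_mul, ha, hb]

/-- Functoriality of the symmetric algebra: an `R`-linear map `V → W` induces an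
`R`-algebra map `Sym_R(V) → Sym_R(W)`. -/
def symMap {V W : Type*} [AddCommGroup V] [Module R V] [AddCommGroup W] [Module R W]
    (f : V →ₗ[R] W) : MySym R V →ₐ[R] MySym R W :=
  RingQuot.liftAlgHom R
    ⟨TensorAlgebra.lift R ((symι R W).comp f), by
      rintro x y ⟨a, b⟩
      have h := RingQuot.mkAlgHom_rel R (SymRel.mul_comm (R := R) (f a) (f b))
      simp only [map_mul] at h
      simp [symι, map_mul, TensorAlgebra.lift_ι_apply, h]⟩

section Aux

variable {R} {V W U : Type*} [AddCommGroup V] [Module R V] [AddCommGroup W] [Module R W]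
  [AddCommGroup U] [Module R U]

theorem mySym_algHom_ext {S : Type*} [Semiring S] [Algebra R S] {f g : MySym R V →ₐ[R] S}
    (h : ∀ x, f (symι R V x) = g (symι R V x)) : f = g := by
  apply RingQuot.ringQuot_ext'
  apply TensorAlgebra.hom_ext
  ext x
  exact h x

@[simp] theorem symMap_symι (f : V →ₗ[R] W) (x : V) :
    symMap R f (symι R V x) = symι R W (f x) := by
  simp [symMap, symι, RingQuot.liftAlgHom_mkAlgHom_apply, TensorAlgebra.lift_ι_apply]

theorem symMap_comp_apply (f : W →ₗ[R] U) (g : V →ₗ[R] W) (a : MySym R V) :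
    symMap R f (symMap R g a) = symMap R (f ∘ₗ g) a := by
  have : (symMap R f).comp (symMap R g) = symMap R (f ∘ₗ g) :=
    mySym_algHom_ext (fun x => by simp)
  exact AlgHom.congr_fun this a

end Aux

variable {G : Type*} [Group G] (H : Subgroup G)
variable (V : Type*) [AddCommGroup V] [Module R V]
variable (ρ : H →* (V ≃ₗ[R] V))
variable {d : ℕ} (perm : G → Equiv.Perm (Fin d)) (hh : G → Fin d → H)

/-- The induced module `Ind_H^G V`, realized on `⊕_{i ∈ G/H} V = (Fin d → V)` via the
chosen coset representatives: `g · (gᵢ ⊗ x) = g_{π_g(i)} ⊗ ρ(h_g(i)) x`, i.e.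
`(g · v)(j) = ρ(h_g(π_g⁻¹ j)) (v (π_g⁻¹ j))`. -/
def indAct (g : G) : (Fin d → V) →ₗ[R] (Fin d → V) where
  toFun v := fun j => ρ (hh g ((perm g).symm j)) (v ((perm g).symm j))
  map_add' v w := by funext j; simp
  map_smul' c v := by funext j; simp

/-- The tensor-induced action of `g ∈ G` on `⊗_{i ∈ G/H} Sym_R(V)`: apply
`MySym(ρ(h_g(i)))` in each factor and permute the factors by `π_g`. -/
def normAct (g : G) :
    (⨂[R] _i : Fin d, MySym R V) →ₗ[R] ⨂[R] _i : Fin d, MySym R V :=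
  (PiTensorProduct.reindex R (fun _ : Fin d => MySym R V) (perm g)).toLinearMap ∘ₗ
    PiTensorProduct.map fun i => (symMap R ((ρ (hh g i) : V ≃ₗ[R] V) : V →ₗ[R] V)).toLinearMap

section Iso

open PiTensorProduct

variable {R H V ρ}

/-- The algebra map `⊗_i Sym(V) → Sym(⊕_i V)`. -/
def toSym : (⨂[R] _i : Fin d, MySym R V) →ₐ[R] MySym R (Fin d → V) :=
  PiTensorProduct.liftAlgHom
    ((MultilinearMap.mkPiAlgebra R (Fin d) (MySym R (Fin d → V))).compLinearMap
      (fun i => (symMap R (LinearMap.single R (fun _ : Fin d => V) i)).toLinearMap))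
    (by simp)
    (fun x y => by simp [Finset.prod_mul_distrib])

@[simp] theorem toSym_tprod (x : Fin d → MySym R V) :
    toSym (PiTensorProduct.tprod R x) =
      ∏ i, symMap R (LinearMap.single R (fun _ : Fin d => V) i) (x i) := by
  unfold toSym
  erw [PiTensorProduct.liftAlgHom_apply]
  simp

/-- The algebra map `Sym(⊕_i V) → ⊗_i Sym(V)`. -/
def invSym : MySym R (Fin d → V) →ₐ[R] ⨂[R] _i : Fin d, MySym R V :=
  RingQuot.liftAlgHom R
    ⟨TensorAlgebra.lift R
      (∑ i, (PiTensorProduct.singleAlgHom (R := R) (A := fun _ : Fin d => MySym R V)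
          i).toLinearMap ∘ₗ (symι R V) ∘ₗ LinearMap.proj i), by
      rintro x y ⟨a, b⟩
      simp only [_root_.map_mul, TensorAlgebra.lift_ι_apply]
      exact mul_comm _ _⟩

@[simp] theorem invSym_symι (v : Fin d → V) :
    invSym (symι R (Fin d → V) v) =
      ∑ i, PiTensorProduct.singleAlgHom (R := R) (A := fun _ : Fin d => MySym R V)
        i (symι R V (v i)) := by
  simp only [invSym, symι, LinearMap.coe_comp, Function.comp_apply, AlgHom.toLinearMap_apply,
    RingQuot.liftAlgHom_mkAlgHom_apply, TensorAlgebra.lift_ι_apply, LinearMap.sum_apply,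
    LinearMap.proj_apply]

theorem toSym_singleAlgHom (i : Fin d) (a : MySym R V) :
    toSym (PiTensorProduct.singleAlgHom (R := R) (A := fun _ : Fin d => MySym R V) i a) =
      symMap R (LinearMap.single R (fun _ : Fin d => V) i) a := by
  rw [PiTensorProduct.singleAlgHom_apply, toSym_tprod, Finset.prod_eq_single i]
  · simp
  · intro j _ hj
    simp [Pi.mulSingle_eq_of_ne hj]
  · intro h; exact absurd (Finset.mem_univ i) h

theorem toSym_comp_invSym : (toSym (d := d)).comp (invSym (V := V)) = AlgHom.id R _ := by
  apply mySym_algHom_ext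
  intro v
  simp only [AlgHom.comp_apply, invSym_symι, map_sum, toSym_singleAlgHom, symMap_symι,
    AlgHom.id_apply]
  rw [← map_sum]
  congr 1
  simp only [LinearMap.single_apply]
  exact Finset.univ_sum_single v

theorem invSym_comp_toSym : (invSym (V := V)).comp (toSym (d := d)) = AlgHom.id R _ := by
  apply PiTensorProduct.algHom_ext
  intro i
  apply mySym_algHom_ext
  intro x
  simp only [AlgHom.comp_apply, toSym_singleAlgHom, symMap_symι, invSym_symι, AlgHom.id_apply]
  rw [Finset.sum_eq_single i]
  · simp [LinearMap.single_apply]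
  · intro j _ hj
    rw [LinearMap.single_apply, Pi.single_eq_of_ne hj, map_zero, map_zero]
  · intro h; exact absurd (Finset.mem_univ i) h

theorem indAct_comp_single (g : G) (i : Fin d) :
    (indAct R H V ρ perm hh g) ∘ₗ LinearMap.single R (fun _ : Fin d => V) i =
      LinearMap.single R (fun _ : Fin d => V) (perm g i) ∘ₗ
        ((ρ (hh g i) : V ≃ₗ[R] V) : V →ₗ[R] V) := by
  ext x j
  simp only [LinearMap.coe_comp, Function.comp_apply, LinearMap.single_apply, indAct,
    LinearMap.coe_mk, AddHom.coe_mk, LinearEquiv.coe_coe]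
  rcases eq_or_ne j (perm g i) with rfl | hj
  · rw [Equiv.symm_apply_apply, Pi.single_eq_same, Pi.single_eq_same]
  · have h1 : (perm g).symm j ≠ i := fun h => hj (by rw [← h, Equiv.apply_symm_apply])
    rw [Pi.single_eq_of_ne h1, Pi.single_eq_of_ne hj, map_zero]

end Iso

/-- Let `R` be a commutative ring, `G` a finite group, `H ≤ G` of index
`d` (with coset representatives `r : Fin d → G`), and `V` an `H`-module over `R`,
free as an `R`-module.  Give `W = ⊗_{i=1}^d Sym_R(V)` the tensor-induced `G`-action
(permuting the tensor factors according to left translation on `G/H`, twisted by the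
`H`-action, as encoded by `π_g` and `h_g` with `g · rᵢ = r_{π_g(i)} · h_g(i)`).
Then there is a `G`-equivariant `R`-algebra isomorphism
`N_H^G Sym_R(V) = ⊗_{G/H} Sym_R(V) ≅ Sym_R(Ind_H^G V)`. -/
theorem norm_of_symmetricAlgebra_eq_symmetricAlgebra_of_ind
    [Fintype G] [Module.Free R V]
    (r : Fin d → G) (hr : Function.Bijective fun i => ((r i : G) : G ⧸ H))
    (hcompat : ∀ (g : G) (i : Fin d), g * r i = r (perm g i) * (hh g i : G)) :
    ∃ e : (⨂[R] _i : Fin d, MySym R V) ≃ₐ[R] MySym R (Fin d → V),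
      ∀ (g : G) (w : ⨂[R] _i : Fin d, MySym R V),
        e (normAct R H V ρ perm hh g w) =
          symMap R (indAct R H V ρ perm hh g) (e w) := by
  refine ⟨AlgEquiv.ofAlgHom toSym invSym toSym_comp_invSym invSym_comp_toSym, fun g w => ?_⟩
  simp only [AlgEquiv.ofAlgHom_apply]
  induction w using PiTensorProduct.induction_on with
  | smul_tprod c x =>
    simp only [map_smul, LinearMap.map_smul_of_tower]
    congr 1
    rw [normAct]
    simp only [LinearMap.coe_comp, Function.comp_apply, LinearEquiv.coe_coe,
      PiTensorProduct.map_tprod, AlgHom.toLinearMap_apply, PiTensorProduct.reindex_tprod,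
      toSym_tprod]
    rw [map_prod]
    rw [← Equiv.prod_comp (perm g) (fun j =>
      symMap R (LinearMap.single R (fun _ : Fin d => V) j)
        (symMap R ((ρ (hh g ((perm g).symm j)) : V ≃ₗ[R] V) : V →ₗ[R] V)
          (x ((perm g).symm j))))]
    refine Finset.prod_congr rfl (fun i _ => ?_)
    rw [Equiv.symm_apply_apply, symMap_comp_apply, symMap_comp_apply,
      indAct_comp_single perm hh g i]
  | add a b ha hb =>
    simp only [map_add, ha, hb]
end
end

section
/- Let k be a field of characteristic p > 0, let F and G be formal group laws over k, and let φ(t) ∈ t·k[[t]] be a nonzero homomorphism from F to G (i.e. φ(F(x,y)) = G(φ(x),φ(y))) with φ'(0) = 0. Then there exists a power series ψ(t) ∈ t·k[[t]] with φ(t) = ψ(t^p), and ψ is a homomorphism from the Frobenius twist F^{(p)} to G, where F^{(p)} is obtained from F by raising all coefficients to the p-th power. -/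
noncomputable section

open scoped Classical

/-- The constant finitely-supported function with value `N` on a finite type. -/
def constBnd (τ : Type*) [Fintype τ] (N : ℕ) : τ →₀ ℕ :=
  Finsupp.equivFunOnFinite.symm fun _ => N

/-- Substitution of the family of power series `a i` (each assumed to have zero
constant term) into the multivariate power series `F`.  The coefficient of a
monomial `d` is computed from polynomial truncations at total degree beyond that
of `d`; when each `a i` has zero constant term this agrees with the usual
substitution `F(a)` of formal power series.  Since `PowerSeries R` is by definition
`MvPowerSeries Unit R`, this also provides composition of one-variable power
series and substitution between one- and multi-variable power series. -/
def msubst {R : Type*} [CommRing R] {σ τ : Type*} [Fintype σ] [Fintype τ]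
    (F : MvPowerSeries σ R) (a : σ → MvPowerSeries τ R) : MvPowerSeries τ R :=
  fun d =>
    MvPolynomial.coeff d
      (MvPolynomial.aeval
        (fun i => MvPowerSeries.trunc R (constBnd τ (d.sum (fun _ m => m) + 1)) (a i))
        (MvPowerSeries.trunc R (constBnd σ (d.sum (fun _ m => m) + 1)) F))

/-- Associativity of a would-be formal group law: `F(F(x,y),z) = F(x,F(y,z))`. -/
def IsAssocFGL {R : Type*} [CommRing R] (F : MvPowerSeries (Fin 2) R) : Prop :=
  msubst F ![msubst F ![(MvPowerSeries.X 0 : MvPowerSeries (Fin 3) R),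
        MvPowerSeries.X 1], MvPowerSeries.X 2]
      = msubst F ![(MvPowerSeries.X 0 : MvPowerSeries (Fin 3) R),
        msubst F ![(MvPowerSeries.X 1 : MvPowerSeries (Fin 3) R), MvPowerSeries.X 2]]

/-- Commutativity of a would-be formal group law: `F(y,x) = F(x,y)`. -/
def IsCommFGL {R : Type*} [CommRing R] (F : MvPowerSeries (Fin 2) R) : Prop :=
  msubst F ![(MvPowerSeries.X 1 : MvPowerSeries (Fin 2) R), MvPowerSeries.X 0] = F

/-- A (one-dimensional, commutative) formal group law over a commutative ring `R`:
a power series `F(x,y) = x + y + (higher order terms)` (no constant term, both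
linear coefficients equal to `1`) that is associative and commutative. -/
structure FormalGroupLaw (R : Type*) [CommRing R] where
  F : MvPowerSeries (Fin 2) R
  coeff_zero : MvPowerSeries.coeff 0 F = 0
  coeff_X : MvPowerSeries.coeff (Finsupp.single (0 : Fin 2) 1) F = 1
  coeff_Y : MvPowerSeries.coeff (Finsupp.single (1 : Fin 2) 1) F = 1
  assoc : IsAssocFGL F
  comm : IsCommFGL F

set_option linter.unusedSectionVars false
set_option linter.unusedVariables false
set_option maxHeartbeats 1000000

namespace Aux
open MvPowerSeries

variable {R : Type*} [CommRing R] {σ τ υ : Type*} [Fintype σ] [Fintype τ] [Fintype υ]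

def dsum (d : τ →₀ ℕ) : ℕ := ∑ i, d i

lemma dsum_def (d : τ →₀ ℕ) : d.sum (fun _ m => m) = dsum d :=
  Finsupp.sum_fintype _ _ (fun _ => rfl)

@[simp] lemma constBnd_apply (N : ℕ) (i : τ) : constBnd τ N i = N := rfl

lemma le_dsum (d : τ →₀ ℕ) (i : τ) : d i ≤ dsum d :=
  Finset.single_le_sum (fun _ _ => Nat.zero_le _) (Finset.mem_univ i)

lemma dsum_add (a b : τ →₀ ℕ) : dsum (a + b) = dsum a + dsum b := by
  simp [dsum, Finset.sum_add_distrib]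

lemma dsum_eq_zero_iff {d : τ →₀ ℕ} : dsum d = 0 ↔ d = 0 := by
  constructor
  · intro h; ext i; exact Nat.le_zero.1 (h ▸ le_dsum d i)
  · rintro rfl; simp [dsum]

lemma dsum_single (i : τ) (n : ℕ) : dsum (Finsupp.single i n) = n := by
  classical
  simp [dsum, Finsupp.single_apply]

lemma dsum_smul (c : ℕ) (d : τ →₀ ℕ) : dsum (c • d) = c * dsum d := by
  simp [dsum, Finset.mul_sum]

lemma lt_constBnd [Nonempty τ] {d : τ →₀ ℕ} {n N : ℕ} (h : dsum d ≤ n) (hN : n < N) :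
    d < constBnd τ N := by
  rw [lt_iff_le_and_ne]
  refine ⟨Finsupp.le_def.2 fun i => le_trans (le_dsum d i) (le_trans h hN.le), ?_⟩
  intro he
  have : d (Classical.arbitrary τ) = N := by rw [he]; rfl
  have h2 := le_dsum d (Classical.arbitrary τ)
  omega

lemma not_lt_constBnd [Nonempty τ] {m : τ →₀ ℕ} {N : ℕ} (h : ¬ m < constBnd τ N) :
    N ≤ dsum m := by
  rw [lt_iff_le_and_ne] at h
  by_cases hle : m ≤ constBnd τ N
  · have hm : m = constBnd τ N := by
      by_contra hne; exact h ⟨hle, hne⟩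
    have : m (Classical.arbitrary τ) = N := by rw [hm]; rfl
    exact this ▸ le_dsum m (Classical.arbitrary τ)
  · rw [Finsupp.le_def] at hle
    push_neg at hle
    obtain ⟨i, hi⟩ := hle
    have := le_dsum m i
    simp only [constBnd_apply] at hi
    omega

/-- The two series agree in all coefficients of total degree at most `n`. -/
def EqTo (n : ℕ) (s t : MvPowerSeries τ R) : Prop :=
  ∀ d : τ →₀ ℕ, dsum d ≤ n → MvPowerSeries.coeff (R := R) d s = MvPowerSeries.coeff (R := R) d t

lemma EqTo.refl (n : ℕ) (s : MvPowerSeries τ R) : EqTo n s s := fun _ _ => rfl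

lemma EqTo.symm {n : ℕ} {s t : MvPowerSeries τ R} (h : EqTo n s t) : EqTo n t s :=
  fun d hd => (h d hd).symm

lemma EqTo.trans {n : ℕ} {s t u : MvPowerSeries τ R} (h : EqTo n s t) (h' : EqTo n t u) :
    EqTo n s u := fun d hd => (h d hd).trans (h' d hd)

lemma eq_of_eqTo {s t : MvPowerSeries τ R} (h : ∀ n, EqTo n s t) : s = t := by
  ext d
  exact h (dsum d) d le_rfl

lemma EqTo.add {n : ℕ} {s t s' t' : MvPowerSeries τ R} (h : EqTo n s s') (h' : EqTo n t t') :
    EqTo n (s + t) (s' + t') := fun d hd => by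
  simp [map_add, h d hd, h' d hd]

lemma EqTo.mul {n : ℕ} {s t s' t' : MvPowerSeries τ R} (h : EqTo n s s') (h' : EqTo n t t') :
    EqTo n (s * t) (s' * t') := fun d hd => by
  classical
  rw [MvPowerSeries.coeff_mul, MvPowerSeries.coeff_mul]
  refine Finset.sum_congr rfl fun uv huv => ?_
  rw [Finset.HasAntidiagonal.mem_antidiagonal] at huv
  have h1 : dsum uv.1 ≤ n := le_trans (by rw [← huv, dsum_add]; omega) hd
  have h2 : dsum uv.2 ≤ n := le_trans (by rw [← huv, dsum_add]; omega) hd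
  rw [h uv.1 h1, h' uv.2 h2]

lemma EqTo.pow {n : ℕ} {s s' : MvPowerSeries τ R} (h : EqTo n s s') (m : ℕ) :
    EqTo n (s ^ m) (s' ^ m) := by
  induction m with
  | zero => simpa using EqTo.refl n 1
  | succ m ih => rw [pow_succ, pow_succ]; exact ih.mul h

lemma EqTo.sum {n : ℕ} {ι : Type*} (s : Finset ι) (f g : ι → MvPowerSeries τ R)
    (h : ∀ i ∈ s, EqTo n (f i) (g i)) : EqTo n (∑ i ∈ s, f i) (∑ i ∈ s, g i) := fun d hd => by
  rw [map_sum, map_sum]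
  exact Finset.sum_congr rfl fun i hi => h i hi d hd

lemma EqTo.aeval {n : ℕ} {b b' : σ → MvPowerSeries τ R} (h : ∀ i, EqTo n (b i) (b' i))
    (P : MvPolynomial σ R) : EqTo n (MvPolynomial.aeval b P) (MvPolynomial.aeval b' P) := by
  induction P using MvPolynomial.induction_on with
  | C r => simp only [MvPolynomial.aeval_C]; exact EqTo.refl n _
  | add p q hp hq => simp only [map_add]; exact hp.add hq
  | mul_X p i hp => simp only [map_mul, MvPolynomial.aeval_X]; exact hp.mul (h i)

end Aux


namespace Aux
open MvPowerSeries

variable {R : Type*} [CommRing R] {σ τ υ : Type*} [Fintype σ] [Fintype τ] [Fintype υ]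

lemma coeff_pow_eq_zero {s : MvPowerSeries τ R} (hs : constantCoeff (σ := τ) (R := R) s = 0) :
    ∀ (m : ℕ) (d : τ →₀ ℕ), dsum d < m → MvPowerSeries.coeff (R := R) d (s ^ m) = 0 := by
  intro m
  induction m with
  | zero => intro d hd; omega
  | succ m ih =>
    intro d hd
    rw [pow_succ', MvPowerSeries.coeff_mul]
    refine Finset.sum_eq_zero fun uv huv => ?_
    rw [Finset.HasAntidiagonal.mem_antidiagonal] at huv
    by_cases hu : uv.1 = 0
    · rw [hu, MvPowerSeries.coeff_zero_eq_constantCoeff, hs, zero_mul]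
    · have h1 : 1 ≤ dsum uv.1 := by
        rcases Nat.eq_zero_or_pos (dsum uv.1) with h | h
        · exact absurd (dsum_eq_zero_iff.1 h) hu
        · exact h
      have : dsum uv.2 < m := by
        have := dsum_add uv.1 uv.2
        rw [huv] at this
        omega
      rw [ih uv.2 this, mul_zero]

lemma coeff_prod_pow_eq_zero {b : σ → MvPowerSeries τ R}
    (hb : ∀ i, constantCoeff (σ := τ) (R := R) (b i) = 0) (m : σ →₀ ℕ) (d : τ →₀ ℕ)
    (hd : dsum d < dsum m) : MvPowerSeries.coeff (R := R) d (∏ i : σ, b i ^ m i) = 0 := by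
  classical
  have key : ∀ (s : Finset σ) (d : τ →₀ ℕ), dsum d < ∑ i ∈ s, m i →
      MvPowerSeries.coeff (R := R) d (∏ i ∈ s, b i ^ m i) = 0 := by
    intro s
    induction s using Finset.induction_on with
    | empty => intro d hd; simp at hd
    | insert a s hx ih =>
      intro d hd
      rw [Finset.prod_insert hx, MvPowerSeries.coeff_mul]
      rw [Finset.sum_insert hx] at hd
      refine Finset.sum_eq_zero fun uv huv => ?_
      rw [Finset.HasAntidiagonal.mem_antidiagonal] at huv
      have hadd : dsum uv.1 + dsum uv.2 = dsum d := by rw [← dsum_add, huv]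
      by_cases hu : dsum uv.1 < m a
      · rw [coeff_pow_eq_zero (hb a) _ _ hu, zero_mul]
      · have : dsum uv.2 < ∑ i ∈ s, m i := by omega
        rw [ih _ this, mul_zero]
  exact key Finset.univ d hd

lemma algebraMap_eq_C (r : R) :
    algebraMap R (MvPowerSeries τ R) r = MvPowerSeries.C (σ := τ) (R := R) r := rfl

lemma coeff_C_mul (d : τ →₀ ℕ) (r : R) (s : MvPowerSeries τ R) :
    MvPowerSeries.coeff (R := R) d (MvPowerSeries.C (σ := τ) (R := R) r * s) = r * MvPowerSeries.coeff (R := R) d s := by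
  classical
  have : (MvPowerSeries.C (σ := τ) (R := R) r : MvPowerSeries τ R) = MvPowerSeries.monomial 0 r := rfl
  rw [this, MvPowerSeries.coeff_monomial_mul]
  simp

lemma aeval_vanish {b : σ → MvPowerSeries τ R} (hb : ∀ i, constantCoeff (σ := τ) (R := R) (b i) = 0)
    {n : ℕ} {P : MvPolynomial σ R} (hP : ∀ m ∈ P.support, n < dsum m) :
    EqTo n (MvPolynomial.aeval b P) 0 := by
  classical
  intro d hd
  rw [MvPolynomial.aeval_def, MvPolynomial.eval₂_eq', map_zero, map_sum]
  refine Finset.sum_eq_zero fun m hm => ?_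
  rw [algebraMap_eq_C, coeff_C_mul,
    coeff_prod_pow_eq_zero hb m d (lt_of_le_of_lt hd (hP m hm)), mul_zero]

lemma constantCoeff_trunc_coe (N : τ →₀ ℕ) (s : MvPowerSeries τ R) (hs : constantCoeff (σ := τ) (R := R) s = 0) :
    constantCoeff (σ := τ) (R := R) ((MvPowerSeries.trunc R N s : MvPolynomial τ R) : MvPowerSeries τ R) = 0 := by
  classical
  rw [← MvPowerSeries.coeff_zero_eq_constantCoeff, MvPolynomial.coeff_coe,
    MvPowerSeries.coeff_trunc]
  split
  · rw [MvPowerSeries.coeff_zero_eq_constantCoeff]; exact hs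
  · rfl

lemma trunc_coe_eqTo [Nonempty τ] {n N : ℕ} (hN : n < N) (s : MvPowerSeries τ R) :
    EqTo n ((MvPowerSeries.trunc R (constBnd τ N) s : MvPolynomial τ R) : MvPowerSeries τ R) s := by
  intro d hd
  rw [MvPolynomial.coeff_coe, MvPowerSeries.coeff_trunc, if_pos (lt_constBnd hd hN)]

end Aux

namespace Aux
open MvPowerSeries

variable {R : Type*} [CommRing R] {σ τ υ : Type*} [Fintype σ] [Fintype τ] [Fintype υ]

lemma coe_aeval (g : σ → MvPolynomial τ R) (P : MvPolynomial σ R) :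
    ((MvPolynomial.aeval g P : MvPolynomial τ R) : MvPowerSeries τ R)
      = MvPolynomial.aeval (fun i => ((g i : MvPolynomial τ R) : MvPowerSeries τ R)) P := by
  have h := MvPolynomial.comp_aeval (f := g)
    (φ := MvPolynomial.coeToMvPowerSeries.algHom (σ := τ) (R := R) R)
  have h2 := AlgHom.congr_fun h P
  simp only [AlgHom.coe_comp, Function.comp_apply,
    MvPolynomial.coeToMvPowerSeries.algHom_apply, Algebra.algebraMap_self,
    MvPowerSeries.map_id] at h2
  simpa using h2

lemma aeval_trunc_a [Nonempty τ] {a : σ → MvPowerSeries τ R} {n N : ℕ} (hN : n < N)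
    (P : MvPolynomial σ R) :
    EqTo n
      (MvPolynomial.aeval
        (fun i => ((trunc R (constBnd τ N) (a i) : MvPolynomial τ R) : MvPowerSeries τ R)) P)
      (MvPolynomial.aeval a P) :=
  EqTo.aeval (fun i => trunc_coe_eqTo hN (a i)) P

lemma aeval_trunc_F [Nonempty σ] [Nonempty τ] {a : σ → MvPowerSeries τ R}
    (ha : ∀ i, constantCoeff (σ := τ) (R := R) (a i) = 0) (F : MvPowerSeries σ R)
    {n M M' : ℕ} (hM : n < M) (hM' : n < M') :
    EqTo n (MvPolynomial.aeval a (trunc R (constBnd σ M) F))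
      (MvPolynomial.aeval a (trunc R (constBnd σ M') F)) := by
  intro d hd
  rw [← sub_eq_zero, ← map_sub, ← map_sub]
  have hsupp : ∀ m ∈ (trunc R (constBnd σ M) F - trunc R (constBnd σ M') F).support,
      n < dsum m := by
    intro m hm
    rw [MvPolynomial.mem_support_iff, MvPolynomial.coeff_sub, MvPowerSeries.coeff_trunc,
      MvPowerSeries.coeff_trunc] at hm
    by_cases h1 : m < constBnd σ M
    · by_cases h2 : m < constBnd σ M'
      · simp [h1, h2] at hm
      · exact lt_of_lt_of_le hM' (not_lt_constBnd h2)
    · exact lt_of_lt_of_le hM (not_lt_constBnd h1)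
  exact aeval_vanish ha hsupp d hd

lemma msubst_eqTo [Nonempty σ] [Nonempty τ] {a : σ → MvPowerSeries τ R}
    (ha : ∀ i, constantCoeff (σ := τ) (R := R) (a i) = 0) (F : MvPowerSeries σ R)
    {n N : ℕ} (hN : n < N) :
    EqTo n (msubst F a) (MvPolynomial.aeval a (trunc R (constBnd σ N) F)) := by
  intro d hd
  have e0 : MvPowerSeries.coeff (R := R) d (msubst F a)
      = MvPolynomial.coeff d
        (MvPolynomial.aeval
          (fun i => trunc R (constBnd τ (dsum d + 1)) (a i))
          (trunc R (constBnd σ (dsum d + 1)) F)) := by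
    rw [MvPowerSeries.coeff_apply]
    show (fun d' : τ →₀ ℕ => MvPolynomial.coeff d'
      (MvPolynomial.aeval
        (fun i => trunc R (constBnd τ (d'.sum (fun _ m => m) + 1)) (a i))
        (trunc R (constBnd σ (d'.sum (fun _ m => m) + 1)) F))) d = _
    simp only [dsum_def]
  rw [e0, ← MvPolynomial.coeff_coe, coe_aeval]
  have h1 := aeval_trunc_a (a := a) (Nat.lt_succ_self (dsum d))
    (trunc R (constBnd σ (dsum d + 1)) F) d le_rfl
  rw [h1]
  exact aeval_trunc_F ha F (Nat.lt_succ_self (dsum d)) (lt_of_le_of_lt hd hN) d le_rfl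

lemma constantCoeff_msubst [Nonempty σ] [Nonempty τ] {a : σ → MvPowerSeries τ R}
    (ha : ∀ i, constantCoeff (σ := τ) (R := R) (a i) = 0) (F : MvPowerSeries σ R) :
    constantCoeff (σ := τ) (R := R) (msubst F a) = constantCoeff (σ := σ) (R := R) F := by
  classical
  have h := msubst_eqTo ha F (n := 0) (N := 1) Nat.zero_lt_one 0 (by simp [dsum])
  rw [MvPowerSeries.coeff_zero_eq_constantCoeff] at h
  rw [h]
  set P := trunc R (constBnd σ 1) F with hP
  have hAH : ∀ (Q : MvPolynomial σ R),
      constantCoeff (σ := τ) (R := R) (MvPolynomial.aeval (R := R) (S₁ := MvPowerSeries τ R) a Q)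
        = MvPolynomial.aeval (fun i => constantCoeff (σ := τ) (R := R) (a i)) Q := by
    intro Q
    have h2 := AlgHom.congr_fun (MvPolynomial.comp_aeval (f := a)
      (φ := { toRingHom := constantCoeff (σ := τ) (R := R),
              commutes' := fun r => by
                rw [algebraMap_eq_C]; exact MvPowerSeries.constantCoeff_C (σ := τ) r })) Q
    exact h2
  rw [hAH]
  have : (fun i => constantCoeff (σ := τ) (R := R) (a i)) = 0 := by funext i; exact ha i
  rw [this, MvPolynomial.aeval_zero, hP]
  have h0 : (0 : σ →₀ ℕ) < constBnd σ 1 := lt_constBnd (n := 0) (by simp [dsum]) Nat.zero_lt_one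
  show algebraMap R R _ = _
  rw [Algebra.algebraMap_self]
  show MvPolynomial.constantCoeff (trunc R (constBnd σ 1) F) = _
  rw [MvPolynomial.constantCoeff_eq]
  show MvPolynomial.coeff 0 _ = _
  rw [MvPowerSeries.coeff_trunc, if_pos h0, MvPowerSeries.coeff_zero_eq_constantCoeff]

end Aux

set_option maxHeartbeats 1000000
set_option maxHeartbeats 1000000 in
theorem _auxdummy : True := trivial
namespace Aux
open MvPowerSeries

variable {R : Type*} [CommRing R] {σ τ υ : Type*} [Fintype σ] [Fintype τ] [Fintype υ]

lemma constBnd_ne_zero [Nonempty σ] {N : ℕ} (hN : 0 < N) : constBnd σ N ≠ 0 := by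
  intro h
  have : constBnd σ N (Classical.arbitrary σ) = 0 := by rw [h]; rfl
  rw [constBnd_apply] at this
  omega

lemma msubst_one [Nonempty σ] [Nonempty τ] {a : σ → MvPowerSeries τ R}
    (ha : ∀ i, constantCoeff (σ := τ) (R := R) (a i) = 0) : msubst (1 : MvPowerSeries σ R) a = 1 := by
  apply eq_of_eqTo; intro n
  refine (msubst_eqTo ha 1 (Nat.lt_succ_self n)).trans ?_
  rw [MvPowerSeries.trunc_one _ (constBnd_ne_zero (Nat.succ_pos n)), map_one]
  exact EqTo.refl n 1

lemma trunc_X [Nonempty σ] {N : ℕ} (hN : 2 ≤ N) (i : σ) :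
    trunc R (constBnd σ N) (MvPowerSeries.X i) = MvPolynomial.X i := by
  classical
  have hs : (Finsupp.single i 1 : σ →₀ ℕ) < constBnd σ N :=
    lt_constBnd (le_of_eq (dsum_single i 1)) (by omega)
  apply MvPolynomial.ext
  intro m
  rw [MvPowerSeries.coeff_trunc, MvPowerSeries.coeff_X, MvPolynomial.coeff_X']
  by_cases h2 : m = Finsupp.single i 1
  · subst h2
    rw [if_pos hs]
  · rw [if_neg (fun hc : (Finsupp.single i 1 : σ →₀ ℕ) = m => h2 hc.symm)]
    by_cases h1 : m < constBnd σ N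
    · rw [if_pos h1, if_neg h2]
    · rw [if_neg h1]

lemma msubst_X [Nonempty σ] [Nonempty τ] {a : σ → MvPowerSeries τ R}
    (ha : ∀ i, constantCoeff (σ := τ) (R := R) (a i) = 0) (i : σ) : msubst (MvPowerSeries.X i) a = a i := by
  apply eq_of_eqTo; intro n
  refine (msubst_eqTo ha (MvPowerSeries.X i) (N := n + 2) (by omega)).trans ?_
  rw [trunc_X (by omega) i, MvPolynomial.aeval_X]
  exact EqTo.refl n _

lemma le_of_add_eq {u v m : σ →₀ ℕ} (h : u + v = m) : u ≤ m := by
  rw [← h]; exact le_self_add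

lemma msubst_mul [Nonempty σ] [Nonempty τ] {a : σ → MvPowerSeries τ R}
    (ha : ∀ i, constantCoeff (σ := τ) (R := R) (a i) = 0) (F G : MvPowerSeries σ R) :
    msubst (F * G) a = msubst F a * msubst G a := by
  classical
  apply eq_of_eqTo; intro n
  have hN : n < n + 1 := Nat.lt_succ_self n
  refine (msubst_eqTo ha (F * G) hN).trans
    (EqTo.trans ?_ ((msubst_eqTo ha F hN).symm.mul (msubst_eqTo ha G hN).symm))
  intro d hd
  rw [← map_mul, ← sub_eq_zero, ← map_sub, ← map_sub]
  refine aeval_vanish ha ?_ d hd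
  intro m hm
  rw [MvPolynomial.mem_support_iff, MvPolynomial.coeff_sub] at hm
  by_cases h1 : m < constBnd σ (n + 1)
  · exfalso; apply hm
    rw [MvPowerSeries.coeff_trunc, if_pos h1, MvPolynomial.coeff_mul,
      MvPowerSeries.coeff_mul]
    rw [sub_eq_zero]
    refine Finset.sum_congr rfl fun uv huv => ?_
    rw [Finset.HasAntidiagonal.mem_antidiagonal] at huv
    have hu : uv.1 < constBnd σ (n + 1) := lt_of_le_of_lt (le_of_add_eq huv) h1
    have hv : uv.2 < constBnd σ (n + 1) :=
      lt_of_le_of_lt (le_of_add_eq (by rw [add_comm]; exact huv)) h1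
    rw [MvPowerSeries.coeff_trunc, if_pos hu, MvPowerSeries.coeff_trunc, if_pos hv]
  · exact lt_of_lt_of_le hN (not_lt_constBnd h1)

lemma msubst_pow [Nonempty σ] [Nonempty τ] {a : σ → MvPowerSeries τ R}
    (ha : ∀ i, constantCoeff (σ := τ) (R := R) (a i) = 0) (F : MvPowerSeries σ R) (m : ℕ) :
    msubst (F ^ m) a = msubst F a ^ m := by
  induction m with
  | zero => simpa using msubst_one ha
  | succ m ih => rw [pow_succ, pow_succ, msubst_mul ha, ih]

lemma msubst_comp [Nonempty σ] [Nonempty τ] [Nonempty υ]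
    {a : σ → MvPowerSeries τ R} {b : τ → MvPowerSeries υ R}
    (ha : ∀ i, constantCoeff (σ := τ) (R := R) (a i) = 0) (hb : ∀ j, constantCoeff (σ := υ) (R := R) (b j) = 0)
    (F : MvPowerSeries σ R) :
    msubst (msubst F a) b = msubst F (fun i => msubst (a i) b) := by
  classical
  have hab : ∀ i, constantCoeff (σ := υ) (R := R) (msubst (a i) b) = 0 := fun i => by
    rw [constantCoeff_msubst hb]; exact ha i
  apply eq_of_eqTo; intro n
  set N := n + 1 with hNdef
  set M := N * Fintype.card τ + 1 with hMdef
  have hcard : 1 ≤ Fintype.card τ := Fintype.card_pos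
  have hN : n < N := Nat.lt_succ_self n
  have hM : n < M := by
    have : N ≤ N * Fintype.card τ := Nat.le_mul_of_pos_right N (by omega)
    omega
  set Q : MvPolynomial τ R :=
    MvPolynomial.aeval (fun i => trunc R (constBnd τ M) (a i)) (trunc R (constBnd σ M) F)
    with hQ
  -- step 1
  have h1 : EqTo n (msubst (msubst F a) b)
      (MvPolynomial.aeval b (trunc R (constBnd τ N) (msubst F a))) :=
    msubst_eqTo hb (msubst F a) hN
  -- step 2 : the truncation of msubst F a is the truncation of ↑Q
  have h2 : trunc R (constBnd τ N) (msubst F a) = trunc R (constBnd τ N) (↑Q) := by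
    apply MvPolynomial.ext
    intro m
    rw [MvPowerSeries.coeff_trunc, MvPowerSeries.coeff_trunc]
    split_ifs with h
    · have hm : dsum m ≤ N * Fintype.card τ := by
        have hle : ∀ i, m i ≤ N := fun i => by
          have := (lt_iff_le_and_ne.1 h).1
          exact (Finsupp.le_def.1 this i)
        calc dsum m = ∑ i, m i := rfl
          _ ≤ ∑ _i : τ, N := Finset.sum_le_sum fun i _ => hle i
          _ = Fintype.card τ * N := by rw [Finset.sum_const, smul_eq_mul, Fintype.card]
          _ = N * Fintype.card τ := mul_comm _ _
      have e1 := msubst_eqTo ha F (n := N * Fintype.card τ) (N := M) (Nat.lt_succ_self _) m hm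
      have e2 := (aeval_trunc_a (a := a) (n := N * Fintype.card τ) (N := M)
        (Nat.lt_succ_self _) (trunc R (constBnd σ M) F)) m hm
      rw [e1, ← e2, ← coe_aeval, hQ]
    · rfl
  -- step 3 : remove outer truncation around ↑Q
  have h3 : EqTo n (MvPolynomial.aeval b (trunc R (constBnd τ N) (↑Q)))
      (MvPolynomial.aeval b Q) := by
    intro d hd
    rw [← sub_eq_zero, ← map_sub, ← map_sub]
    refine aeval_vanish hb ?_ d hd
    intro m hm
    rw [MvPolynomial.mem_support_iff, MvPolynomial.coeff_sub] at hm
    by_cases h : m < constBnd τ N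
    · exfalso; apply hm
      rw [MvPowerSeries.coeff_trunc, if_pos h, MvPolynomial.coeff_coe, sub_self]
    · exact lt_of_lt_of_le hN (not_lt_constBnd h)
  -- step 4 : compose the two polynomial evaluations
  have h4 : MvPolynomial.aeval (S₁ := MvPowerSeries υ R) b Q
      = MvPolynomial.aeval (fun i => MvPolynomial.aeval b (trunc R (constBnd τ M) (a i)))
          (trunc R (constBnd σ M) F) := by
    rw [hQ]
    exact AlgHom.congr_fun
      (MvPolynomial.comp_aeval (f := fun i => trunc R (constBnd τ M) (a i))
        (φ := MvPolynomial.aeval (R := R) b)) (trunc R (constBnd σ M) F)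
  -- step 5 : replace inner evaluations by msubst
  have h5 : EqTo n
      (MvPolynomial.aeval (fun i => MvPolynomial.aeval b (trunc R (constBnd τ M) (a i)))
        (trunc R (constBnd σ M) F))
      (MvPolynomial.aeval (fun i => msubst (a i) b) (trunc R (constBnd σ M) F)) :=
    EqTo.aeval (fun i => (msubst_eqTo hb (a i) hM).symm) _
  have h6 : EqTo n (MvPolynomial.aeval (fun i => msubst (a i) b) (trunc R (constBnd σ M) F))
      (msubst F (fun i => msubst (a i) b)) := (msubst_eqTo hab F hM).symm
  rw [h2] at h1
  rw [h4] at h3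
  exact h1.trans (h3.trans (h5.trans h6))

end Aux

namespace Aux
open MvPowerSeries

variable {R : Type*} [CommRing R] {σ τ υ : Type*} [Fintype σ] [Fintype τ] [Fintype υ]

lemma expand_eq_aeval (p : ℕ) (f : MvPolynomial σ R) :
    MvPolynomial.aeval (fun i => MvPolynomial.X i ^ p) f = MvPolynomial.expand p f := by
  have h : (MvPolynomial.expand p : MvPolynomial σ R →ₐ[R] MvPolynomial σ R)
      = MvPolynomial.aeval (fun i => MvPolynomial.X i ^ p) :=
    (MvPolynomial.algHom_ext (fun i => by simp)).symm
  rw [h]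

lemma expand_monomial' {p : ℕ} (hp : 0 < p) (m : σ →₀ ℕ) (r : R) :
    MvPolynomial.expand p (MvPolynomial.monomial m r) = MvPolynomial.monomial (p • m) r := by
  rw [MvPolynomial.expand_monomial, MvPolynomial.monomial_eq]

lemma smul_finsupp_cancel {p : ℕ} (hp : 0 < p) {m e : σ →₀ ℕ} (h : p • m = p • e) : m = e := by
  ext i
  have := DFunLike.congr_fun h i
  rw [Finsupp.smul_apply, Finsupp.smul_apply, smul_eq_mul, smul_eq_mul] at this
  exact Nat.eq_of_mul_eq_mul_left hp this

lemma coeff_expand_smul {p : ℕ} (hp : 0 < p) (f : MvPolynomial σ R) (e : σ →₀ ℕ) :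
    MvPolynomial.coeff (p • e) (MvPolynomial.expand p f) = MvPolynomial.coeff e f := by
  classical
  conv_lhs => rw [f.as_sum, map_sum]
  rw [MvPolynomial.coeff_sum]
  have h1 : ∀ m ∈ f.support,
      MvPolynomial.coeff (p • e) (MvPolynomial.expand p
        (MvPolynomial.monomial m (MvPolynomial.coeff m f)))
      = if m = e then MvPolynomial.coeff m f else 0 := by
    intro m _
    rw [expand_monomial' hp, MvPolynomial.coeff_monomial]
    by_cases h : m = e
    · rw [if_pos (by rw [h]), if_pos h]
    · rw [if_neg (fun hc => h (smul_finsupp_cancel hp hc)), if_neg h]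
  rw [Finset.sum_congr rfl h1, Finset.sum_ite_eq' f.support e]
  split_ifs with h
  · rfl
  · rw [MvPolynomial.notMem_support_iff] at h
    rw [h]

lemma coeff_expand_not_dvd {p : ℕ} (hp : 0 < p) (f : MvPolynomial σ R) (d : σ →₀ ℕ)
    (hd : ¬ ∀ i, p ∣ d i) : MvPolynomial.coeff d (MvPolynomial.expand p f) = 0 := by
  classical
  conv_lhs => rw [f.as_sum, map_sum]
  rw [MvPolynomial.coeff_sum]
  refine Finset.sum_eq_zero fun m _ => ?_
  rw [expand_monomial' hp, MvPolynomial.coeff_monomial, if_neg]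
  intro h
  exact hd fun i => ⟨m i, by rw [← h, Finsupp.smul_apply, smul_eq_mul]⟩

lemma constantCoeff_X_pow {p : ℕ} (hp : 0 < p) (i : σ) :
    constantCoeff (σ := σ) (R := R) (MvPowerSeries.X i ^ p) = 0 := by
  rw [map_pow, MvPowerSeries.constantCoeff_X, zero_pow (by omega)]

lemma msubst_dil_trunc [Nonempty σ] {p : ℕ} (hp : 0 < p) (s : MvPowerSeries σ R) {n N : ℕ}
    (hN : n < N) :
    EqTo n (msubst s (fun i => MvPowerSeries.X i ^ p))
      ((MvPolynomial.expand p (trunc R (constBnd σ N) s) : MvPolynomial σ R) :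
        MvPowerSeries σ R) := by
  refine (msubst_eqTo (fun i => constantCoeff_X_pow hp i) s hN).trans ?_
  have h : (fun i : σ => (MvPowerSeries.X i : MvPowerSeries σ R) ^ p)
      = fun i => (((MvPolynomial.X i ^ p : MvPolynomial σ R)) : MvPowerSeries σ R) := by
    funext i; rw [MvPolynomial.coe_pow, MvPolynomial.coe_X]
  rw [h, ← coe_aeval, expand_eq_aeval]
  exact EqTo.refl n _

lemma coeff_msubst_dil_smul [Nonempty σ] {p : ℕ} (hp : 0 < p) (s : MvPowerSeries σ R)
    (e : σ →₀ ℕ) :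
    MvPowerSeries.coeff (R := R) (p • e) (msubst s (fun i => MvPowerSeries.X i ^ p))
      = MvPowerSeries.coeff (R := R) e s := by
  have h := msubst_dil_trunc hp s (Nat.lt_succ_self (dsum (p • e))) (p • e) le_rfl
  rw [h, MvPolynomial.coeff_coe, coeff_expand_smul hp, MvPowerSeries.coeff_trunc, if_pos]
  refine lt_constBnd (n := dsum (p • e)) ?_ (Nat.lt_succ_self _)
  rw [dsum_smul]
  exact Nat.le_mul_of_pos_left _ hp

lemma coeff_msubst_dil_not_dvd [Nonempty σ] {p : ℕ} (hp : 0 < p) (s : MvPowerSeries σ R)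
    (d : σ →₀ ℕ) (hd : ¬ ∀ i, p ∣ d i) :
    MvPowerSeries.coeff (R := R) d (msubst s (fun i => MvPowerSeries.X i ^ p)) = 0 := by
  have h := msubst_dil_trunc hp s (Nat.lt_succ_self (dsum d)) d le_rfl
  rw [h, MvPolynomial.coeff_coe, coeff_expand_not_dvd hp _ _ hd]

lemma msubst_dil_injective [Nonempty σ] {p : ℕ} (hp : 0 < p) {s t : MvPowerSeries σ R}
    (h : msubst s (fun i => MvPowerSeries.X i ^ p) = msubst t (fun i => MvPowerSeries.X i ^ p)) :
    s = t := by
  ext e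
  rw [← coeff_msubst_dil_smul hp s e, ← coeff_msubst_dil_smul hp t e, h]

section Char

variable {k : Type*} [Field k] (p : ℕ) [Fact p.Prime] [CharP k p]

lemma mv_expand_char (f : MvPolynomial σ k) :
    MvPolynomial.map (frobenius k p) (MvPolynomial.expand p f) = f ^ p := by
  induction f using MvPolynomial.induction_on' with
  | monomial m r =>
    rw [expand_monomial' (Fact.out (p := p.Prime)).pos, MvPolynomial.map_monomial,
      MvPolynomial.monomial_pow, frobenius_def]
  | add f g hf hg => rw [map_add, map_add, hf, hg, add_pow_char]

lemma trunc_map (N : σ →₀ ℕ) (f : k →+* k) (s : MvPowerSeries σ k) :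
    trunc k N (MvPowerSeries.map (σ := σ) f s) = MvPolynomial.map f (trunc k N s) := by
  classical
  apply MvPolynomial.ext; intro m
  rw [MvPowerSeries.coeff_trunc, MvPolynomial.coeff_map, MvPowerSeries.coeff_trunc,
    MvPowerSeries.coeff_map]
  split_ifs
  · rfl
  · rw [map_zero]

lemma msubst_frob [Nonempty σ] (F : MvPowerSeries σ k) :
    msubst (MvPowerSeries.map (σ := σ) (frobenius k p) F) (fun i => MvPowerSeries.X i ^ p) = F ^ p := by
  have hp : 0 < p := (Fact.out (p := p.Prime)).pos
  apply eq_of_eqTo; intro n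
  have e1 : ((MvPolynomial.expand p (trunc k (constBnd σ (n + 1))
        (MvPowerSeries.map (σ := σ) (frobenius k p) F)) : MvPolynomial σ k) : MvPowerSeries σ k)
      = ((trunc k (constBnd σ (n + 1)) F : MvPolynomial σ k) : MvPowerSeries σ k) ^ p := by
    rw [trunc_map, ← MvPolynomial.map_expand, mv_expand_char, MvPolynomial.coe_pow]
  refine (msubst_dil_trunc hp _ (Nat.lt_succ_self n)).trans ?_
  rw [e1]
  exact (trunc_coe_eqTo (Nat.lt_succ_self n) F).pow p

end Char

end Aux

namespace Aux
open MvPowerSeries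

variable {R : Type*} [CommRing R] {σ τ υ : Type*} [Fintype σ] [Fintype τ] [Fintype υ]

lemma unit_finsupp_eq (d : Unit →₀ ℕ) : d = Finsupp.single () (d ()) := Finsupp.unique_single d

lemma dsum_unit (d : Unit →₀ ℕ) : dsum d = d () := by
  show ∑ i : Unit, d i = d ()
  exact Fintype.sum_unique _

lemma constBnd_unit (N : ℕ) : constBnd Unit N = Finsupp.single () N := by
  apply Finsupp.ext
  intro i
  cases i
  rw [constBnd_apply, Finsupp.single_eq_same]

lemma lt_constBnd_unit {m : Unit →₀ ℕ} {N : ℕ} : m < constBnd Unit N ↔ m () < N := by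
  constructor
  · rintro ⟨hle, hne⟩
    rcases Nat.lt_or_ge (m ()) N with h | h
    · exact h
    · exfalso
      have h1 : m () ≤ N := Finsupp.le_def.1 hle ()
      have h2 : m () = N := le_antisymm h1 h
      apply hne
      rw [Finsupp.le_def]
      intro i; cases i
      rw [constBnd_apply, h2]
  · intro h
    exact lt_constBnd (n := m ()) (le_of_eq (dsum_unit m)) h

lemma msubst_unit_eqTo [Nonempty τ] {A : MvPowerSeries τ R} (hA : constantCoeff (σ := τ) (R := R) A = 0)
    (φ : PowerSeries R) (n : ℕ) :
    EqTo n (msubst φ (fun _ : Unit => A))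
      (∑ m ∈ Finset.range (n + 1), MvPowerSeries.C (σ := τ) (R := R) (PowerSeries.coeff (R := R) m φ) * A ^ m) := by
  classical
  refine (msubst_eqTo (σ := Unit) (fun _ => hA) φ (N := n + 1) (Nat.lt_succ_self n)).trans ?_
  have htr : (trunc R (constBnd Unit (n + 1)) φ) = ∑ m ∈ Finset.range (n + 1),
      MvPolynomial.monomial (Finsupp.single () m) (PowerSeries.coeff (R := R) m φ) := by
    show truncFinset R _ _ = _
    rw [truncFinset_apply]
    refine Finset.sum_nbij' (i := fun m => m ()) (j := fun m => Finsupp.single () m)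
      ?_ ?_ ?_ ?_ ?_
    · intro m hm
      rw [Finset.mem_Iio] at hm
      rw [Finset.mem_range]
      exact lt_constBnd_unit.1 hm
    · intro m hm
      rw [Finset.mem_range] at hm
      rw [Finset.mem_Iio, lt_constBnd_unit, Finsupp.single_eq_same]
      exact hm
    · intro m _
      exact (unit_finsupp_eq m).symm
    · intro m _
      simp
    · intro m _
      conv_lhs => rw [unit_finsupp_eq m]
      rfl
  rw [show @trunc Unit (fun a b => Classical.propDecidable (a = b)) R _ = @trunc Unit instDecidableEqPUnit R _ from by congr; exact Subsingleton.elim _ _]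
  rw [htr, map_sum]
  have hterm : ∀ m : ℕ, (MvPolynomial.aeval (fun _ : Unit => A))
      (MvPolynomial.monomial (Finsupp.single () m) (PowerSeries.coeff (R := R) m φ))
      = MvPowerSeries.C (σ := τ) (R := R) (PowerSeries.coeff (R := R) m φ) * A ^ m := by
    intro m
    rw [MvPolynomial.aeval_monomial, algebraMap_eq_C]
    congr 1
    exact Finsupp.prod_single_index (pow_zero A)
  rw [Finset.sum_congr rfl fun m _ => hterm m]
  exact EqTo.refl n _

lemma coeff_msubst_unit [Nonempty τ] {A : MvPowerSeries τ R} (hA : constantCoeff (σ := τ) (R := R) A = 0)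
    (φ : PowerSeries R) (d : τ →₀ ℕ) :
    MvPowerSeries.coeff (R := R) d (msubst φ (fun _ : Unit => A))
      = ∑ m ∈ Finset.range (dsum d + 1),
          PowerSeries.coeff (R := R) m φ * MvPowerSeries.coeff (R := R) d (A ^ m) := by
  have h := msubst_unit_eqTo hA φ (dsum d) d le_rfl
  rw [h, map_sum]
  exact Finset.sum_congr rfl fun m _ => coeff_C_mul _ _ _

lemma coeff_msubst_X_single [Nonempty τ] (φ : PowerSeries R) (j : τ) (q : τ →₀ ℕ) :
    MvPowerSeries.coeff (R := R) q (msubst φ (fun _ : Unit => MvPowerSeries.X j))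
      = if q = Finsupp.single j (q j) then PowerSeries.coeff (R := R) (q j) φ else 0 := by
  classical
  rw [coeff_msubst_unit (MvPowerSeries.constantCoeff_X j) φ q]
  have hterm : ∀ m : ℕ, MvPowerSeries.coeff (R := R) q ((MvPowerSeries.X j : MvPowerSeries τ R) ^ m)
      = if q = Finsupp.single j m then 1 else 0 := by
    intro m
    rw [MvPowerSeries.X_pow_eq, MvPowerSeries.coeff_monomial]
  by_cases h : q = Finsupp.single j (q j)
  · rw [if_pos h]
    rw [Finset.sum_eq_single (q j)]
    · rw [hterm, if_pos h, mul_one]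
    · intro m _ hne
      rw [hterm, if_neg, mul_zero]
      intro hc
      apply hne
      rw [hc, Finsupp.single_eq_same]
    · intro habs
      exfalso
      apply habs
      rw [Finset.mem_range]
      exact Nat.lt_succ_of_le (le_dsum q j)
  · rw [if_neg h]
    refine Finset.sum_eq_zero fun m _ => ?_
    rw [hterm, if_neg, mul_zero]
    intro hc
    apply h
    rw [hc, Finsupp.single_eq_same]

end Aux

namespace Aux
open MvPowerSeries

variable {R : Type*} [CommRing R]

/-- the exponent `x¹ yʲ`. -/
def dj (j : ℕ) : Fin 2 →₀ ℕ := Finsupp.single 0 1 + Finsupp.single 1 j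

@[simp] lemma dj_apply0 (j : ℕ) : dj j 0 = 1 := by
  simp [dj, Finsupp.single_apply]

@[simp] lemma dj_apply1 (j : ℕ) : dj j 1 = j := by
  simp [dj, Finsupp.single_apply]

@[simp] lemma single1_apply0 (j : ℕ) : (Finsupp.single (1 : Fin 2) j) 0 = 0 := by
  simp [Finsupp.single_apply]

@[simp] lemma single1_apply1 (j : ℕ) : (Finsupp.single (1 : Fin 2) j) 1 = j := by
  simp

lemma dsum_dj (j : ℕ) : dsum (dj j) = 1 + j := by
  rw [dj, dsum_add, dsum_single, dsum_single]

lemma eq_single1 {q : Fin 2 →₀ ℕ} (h : q 0 = 0) : q = Finsupp.single 1 (q 1) := by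
  apply Finsupp.ext
  intro i
  fin_cases i
  · simpa using h
  · simp

lemma eq_dj {q : Fin 2 →₀ ℕ} (h : q 0 = 1) : q = dj (q 1) := by
  apply Finsupp.ext
  intro i
  fin_cases i
  · simpa using h
  · simp

lemma coeff_y_mul (j : ℕ) (s t : MvPowerSeries (Fin 2) R) :
    MvPowerSeries.coeff (R := R) (Finsupp.single 1 j) (s * t)
      = ∑ ab ∈ Finset.HasAntidiagonal.antidiagonal j,
          MvPowerSeries.coeff (R := R) (Finsupp.single 1 ab.1) s
            * MvPowerSeries.coeff (R := R) (Finsupp.single 1 ab.2) t := by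
  classical
  rw [MvPowerSeries.coeff_mul]
  refine Finset.sum_nbij' (i := fun qr => (qr.1 1, qr.2 1))
    (j := fun ab => (Finsupp.single 1 ab.1, Finsupp.single 1 ab.2)) ?_ ?_ ?_ ?_ ?_
  · intro qr hqr
    rw [Finset.HasAntidiagonal.mem_antidiagonal] at hqr ⊢
    have := DFunLike.congr_fun hqr 1
    simpa using this
  · intro ab hab
    rw [Finset.HasAntidiagonal.mem_antidiagonal] at hab ⊢
    rw [← Finsupp.single_add, hab]
  · intro qr hqr
    rw [Finset.HasAntidiagonal.mem_antidiagonal] at hqr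
    have h0 := DFunLike.congr_fun hqr 0
    simp only [Finsupp.add_apply, single1_apply0] at h0
    have hq : qr.1 0 = 0 := by omega
    have hr : qr.2 0 = 0 := by omega
    exact Prod.ext (eq_single1 hq).symm (eq_single1 hr).symm
  · intro ab _
    simp
  · intro qr hqr
    rw [Finset.HasAntidiagonal.mem_antidiagonal] at hqr
    have h0 := DFunLike.congr_fun hqr 0
    simp only [Finsupp.add_apply, single1_apply0] at h0
    have hq : qr.1 0 = 0 := by omega
    have hr : qr.2 0 = 0 := by omega
    show MvPowerSeries.coeff (R := R) qr.1 s * MvPowerSeries.coeff (R := R) qr.2 t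
      = MvPowerSeries.coeff (R := R) (Finsupp.single 1 (qr.1 1)) s
        * MvPowerSeries.coeff (R := R) (Finsupp.single 1 (qr.2 1)) t
    rw [← eq_single1 hq, ← eq_single1 hr]

lemma coeff_xy_mul (j : ℕ) (s t : MvPowerSeries (Fin 2) R) :
    MvPowerSeries.coeff (R := R) (dj j) (s * t)
      = (∑ ab ∈ Finset.HasAntidiagonal.antidiagonal j,
          MvPowerSeries.coeff (R := R) (Finsupp.single 1 ab.1) s * MvPowerSeries.coeff (R := R) (dj ab.2) t)
        + ∑ ab ∈ Finset.HasAntidiagonal.antidiagonal j,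
            MvPowerSeries.coeff (R := R) (dj ab.1) s * MvPowerSeries.coeff (R := R) (Finsupp.single 1 ab.2) t := by
  classical
  rw [MvPowerSeries.coeff_mul]
  rw [← Finset.sum_filter_add_sum_filter_not (Finset.HasAntidiagonal.antidiagonal (dj j))
    (fun qr => qr.1 0 = 0)]
  congr 1
  · refine Finset.sum_nbij' (i := fun qr => (qr.1 1, qr.2 1))
      (j := fun ab => (Finsupp.single 1 ab.1, dj ab.2)) ?_ ?_ ?_ ?_ ?_
    · intro qr hqr
      rw [Finset.mem_filter, Finset.HasAntidiagonal.mem_antidiagonal] at hqr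
      rw [Finset.HasAntidiagonal.mem_antidiagonal]
      have := DFunLike.congr_fun hqr.1 1
      simpa using this
    · intro ab hab
      rw [Finset.HasAntidiagonal.mem_antidiagonal] at hab
      rw [Finset.mem_filter, Finset.HasAntidiagonal.mem_antidiagonal]
      constructor
      · apply Finsupp.ext
        intro i
        fin_cases i
        · simp [Finsupp.add_apply]
        · simpa [Finsupp.add_apply] using hab
      · simp
    · intro qr hqr
      rw [Finset.mem_filter, Finset.HasAntidiagonal.mem_antidiagonal] at hqr
      have hq : qr.1 0 = 0 := hqr.2
      have h0 := DFunLike.congr_fun hqr.1 0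
      simp only [Finsupp.add_apply, dj_apply0, hq] at h0
      have hr : qr.2 0 = 1 := by omega
      exact Prod.ext (eq_single1 hq).symm (eq_dj hr).symm
    · intro ab _
      simp
    · intro qr hqr
      rw [Finset.mem_filter, Finset.HasAntidiagonal.mem_antidiagonal] at hqr
      have hq : qr.1 0 = 0 := hqr.2
      have h0 := DFunLike.congr_fun hqr.1 0
      simp only [Finsupp.add_apply, dj_apply0, hq] at h0
      have hr : qr.2 0 = 1 := by omega
      show MvPowerSeries.coeff (R := R) qr.1 s * MvPowerSeries.coeff (R := R) qr.2 t
        = MvPowerSeries.coeff (R := R) (Finsupp.single 1 (qr.1 1)) s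
          * MvPowerSeries.coeff (R := R) (dj (qr.2 1)) t
      rw [← eq_single1 hq, ← eq_dj hr]
  · refine Finset.sum_nbij' (i := fun qr => (qr.1 1, qr.2 1))
      (j := fun ab => (dj ab.1, Finsupp.single 1 ab.2)) ?_ ?_ ?_ ?_ ?_
    · intro qr hqr
      rw [Finset.mem_filter, Finset.HasAntidiagonal.mem_antidiagonal] at hqr
      rw [Finset.HasAntidiagonal.mem_antidiagonal]
      have := DFunLike.congr_fun hqr.1 1
      simpa using this
    · intro ab hab
      rw [Finset.HasAntidiagonal.mem_antidiagonal] at hab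
      rw [Finset.mem_filter, Finset.HasAntidiagonal.mem_antidiagonal]
      constructor
      · apply Finsupp.ext
        intro i
        fin_cases i
        · simp [Finsupp.add_apply]
        · simpa [Finsupp.add_apply] using hab
      · simp
    · intro qr hqr
      rw [Finset.mem_filter, Finset.HasAntidiagonal.mem_antidiagonal] at hqr
      have h0 := DFunLike.congr_fun hqr.1 0
      simp only [Finsupp.add_apply, dj_apply0] at h0
      have hq : qr.1 0 = 1 := by omega
      have hr : qr.2 0 = 0 := by omega
      exact Prod.ext (eq_dj hq).symm (eq_single1 hr).symm
    · intro ab _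
      simp
    · intro qr hqr
      rw [Finset.mem_filter, Finset.HasAntidiagonal.mem_antidiagonal] at hqr
      have h0 := DFunLike.congr_fun hqr.1 0
      simp only [Finsupp.add_apply, dj_apply0] at h0
      have hq : qr.1 0 = 1 := by omega
      have hr : qr.2 0 = 0 := by omega
      show MvPowerSeries.coeff (R := R) qr.1 s * MvPowerSeries.coeff (R := R) qr.2 t
        = MvPowerSeries.coeff (R := R) (dj (qr.1 1)) s
          * MvPowerSeries.coeff (R := R) (Finsupp.single 1 (qr.2 1)) t
      rw [← eq_dj hq, ← eq_single1 hr]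

/-- `F(0, y)` as a one-variable power series. -/
def pO (F : MvPowerSeries (Fin 2) R) : PowerSeries R :=
  PowerSeries.mk fun j => MvPowerSeries.coeff (R := R) (Finsupp.single 1 j) F

/-- the coefficient of `x¹` in `F`, as a one-variable power series in `y`. -/
def pI (F : MvPowerSeries (Fin 2) R) : PowerSeries R :=
  PowerSeries.mk fun j => MvPowerSeries.coeff (R := R) (dj j) F

@[simp] lemma coeff_pO (F : MvPowerSeries (Fin 2) R) (j : ℕ) :
    PowerSeries.coeff (R := R) j (pO F) = MvPowerSeries.coeff (R := R) (Finsupp.single 1 j) F :=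
  PowerSeries.coeff_mk _ _

@[simp] lemma coeff_pI (F : MvPowerSeries (Fin 2) R) (j : ℕ) :
    PowerSeries.coeff (R := R) j (pI F) = MvPowerSeries.coeff (R := R) (dj j) F :=
  PowerSeries.coeff_mk _ _

lemma coeff_y_pow (F : MvPowerSeries (Fin 2) R) :
    ∀ (m : ℕ) (j : ℕ), MvPowerSeries.coeff (R := R) (Finsupp.single 1 j) (F ^ m)
      = PowerSeries.coeff (R := R) j (pO F ^ m) := by
  intro m
  induction m with
  | zero =>
    intro j
    classical
    rw [pow_zero, pow_zero, MvPowerSeries.coeff_one, PowerSeries.coeff_one]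
    by_cases h : j = 0
    · subst h; simp
    · rw [if_neg h, if_neg (fun hc => h (by simpa using DFunLike.congr_fun hc 1))]
  | succ m ih =>
    intro j
    rw [pow_succ', pow_succ', coeff_y_mul, PowerSeries.coeff_mul]
    refine Finset.sum_congr rfl fun ab _ => ?_
    rw [ih ab.2, coeff_pO]

lemma dj_ne_zero (j : ℕ) : dj j ≠ 0 := by
  intro h
  have := DFunLike.congr_fun h 0
  simp at this

lemma coeff_xy_pow (F : MvPowerSeries (Fin 2) R) :
    ∀ (m : ℕ) (j : ℕ), MvPowerSeries.coeff (R := R) (dj j) (F ^ m)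
      = (m : R) * PowerSeries.coeff (R := R) j (pO F ^ (m - 1) * pI F) := by
  intro m
  induction m with
  | zero =>
    intro j
    classical
    rw [pow_zero, MvPowerSeries.coeff_one, if_neg (dj_ne_zero j), Nat.cast_zero, zero_mul]
  | succ m ih =>
    intro j
    rw [pow_succ', coeff_xy_mul]
    have hA : (∑ ab ∈ Finset.HasAntidiagonal.antidiagonal j,
        MvPowerSeries.coeff (R := R) (Finsupp.single 1 ab.1) F
          * MvPowerSeries.coeff (R := R) (dj ab.2) (F ^ m))
        = (m : R) * PowerSeries.coeff (R := R) j (pO F ^ m * pI F) := by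
      cases m with
      | zero =>
        rw [Nat.cast_zero, zero_mul]
        refine Finset.sum_eq_zero fun ab _ => ?_
        classical
        rw [pow_zero, MvPowerSeries.coeff_one, if_neg (dj_ne_zero ab.2), mul_zero]
      | succ m' =>
        have h1 : ∀ ab : ℕ × ℕ,
            MvPowerSeries.coeff (R := R) (Finsupp.single 1 ab.1) F
              * MvPowerSeries.coeff (R := R) (dj ab.2) (F ^ (m' + 1))
            = ((m' + 1 : ℕ) : R) * (PowerSeries.coeff (R := R) ab.1 (pO F)
                * PowerSeries.coeff (R := R) ab.2 (pO F ^ m' * pI F)) := by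
          intro ab
          rw [ih ab.2, Nat.add_sub_cancel, coeff_pO]
          ring
        rw [Finset.sum_congr rfl fun ab _ => h1 ab, ← Finset.mul_sum,
          ← PowerSeries.coeff_mul]
        congr 1
        rw [← mul_assoc, ← pow_succ']
    have hB : (∑ ab ∈ Finset.HasAntidiagonal.antidiagonal j,
        MvPowerSeries.coeff (R := R) (dj ab.1) F
          * MvPowerSeries.coeff (R := R) (Finsupp.single 1 ab.2) (F ^ m))
        = PowerSeries.coeff (R := R) j (pI F * pO F ^ m) := by
      rw [PowerSeries.coeff_mul]
      refine Finset.sum_congr rfl fun ab _ => ?_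
      rw [coeff_y_pow, coeff_pI]
    rw [hA, hB, Nat.add_sub_cancel]
    push_cast
    rw [mul_comm (pI F) (pO F ^ m)]
    ring

end Aux

namespace Aux
open MvPowerSeries

variable {R : Type*} [CommRing R]

lemma ps_constantCoeff_eq (φ : PowerSeries R) :
    constantCoeff (σ := Unit) (R := R) φ = PowerSeries.coeff (R := R) 0 φ := by
  rw [PowerSeries.coeff_zero_eq_constantCoeff]; rfl

lemma ps_coeff_pow_eq_zero {A : PowerSeries R} (hA : PowerSeries.coeff (R := R) 0 A = 0)
    {m b : ℕ} (h : b < m) : PowerSeries.coeff (R := R) b (A ^ m) = 0 := by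
  have h0 : constantCoeff (σ := Unit) (R := R) A = 0 := by rw [ps_constantCoeff_eq]; exact hA
  exact coeff_pow_eq_zero (τ := Unit) h0 m (Finsupp.single () b)
    (by rw [dsum_single]; exact h)

lemma coeff_pow_self {A : PowerSeries R} (hA : PowerSeries.coeff (R := R) 0 A = 0) :
    ∀ n, PowerSeries.coeff (R := R) n (A ^ n) = (PowerSeries.coeff (R := R) 1 A) ^ n := by
  intro n
  induction n with
  | zero => simp
  | succ n ih =>
    rw [pow_succ', PowerSeries.coeff_mul, Finset.sum_eq_single (1, n)]
    · rw [ih, pow_succ']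
    · intro ab hab hne
      rw [Finset.HasAntidiagonal.mem_antidiagonal] at hab
      rcases Nat.lt_trichotomy ab.2 n with h | h | h
      · rw [ps_coeff_pow_eq_zero hA h, mul_zero]
      · exfalso; apply hne
        have h1 : ab.1 = 1 := by omega
        exact Prod.ext h1 h
      · have h1 : ab.1 = 0 := by omega
        rw [h1, hA, zero_mul]
    · intro habs
      exfalso; apply habs
      rw [Finset.HasAntidiagonal.mem_antidiagonal]
      omega

lemma coeff_lead_mul {A B : PowerSeries R} (hA : PowerSeries.coeff (R := R) 0 A = 0) (n : ℕ) :
    PowerSeries.coeff (R := R) n (A ^ n * B)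
      = (PowerSeries.coeff (R := R) 1 A) ^ n * PowerSeries.coeff (R := R) 0 B := by
  rw [PowerSeries.coeff_mul, Finset.sum_eq_single (n, 0)]
  · rw [coeff_pow_self hA]
  · intro ab hab hne
    rw [Finset.HasAntidiagonal.mem_antidiagonal] at hab
    rcases Nat.lt_or_ge ab.1 n with h | h
    · rw [ps_coeff_pow_eq_zero hA h, zero_mul]
    · exfalso; apply hne
      have h1 : ab.1 = n := by omega
      exact Prod.ext h1 (by omega)
  · intro habs
    exfalso; apply habs
    rw [Finset.HasAntidiagonal.mem_antidiagonal]
    omega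

section uv

variable {φ : PowerSeries R}

lemma constantCoeff_uv (j : Fin 2) (hc : PowerSeries.coeff (R := R) 0 φ = 0) :
    constantCoeff (σ := (Fin 2)) (R := R) (msubst φ (fun _ : Unit => MvPowerSeries.X j)) = 0 := by
  rw [constantCoeff_msubst (fun _ => MvPowerSeries.constantCoeff_X j), ps_constantCoeff_eq]
  exact hc

lemma coeff_u_zero_of_le_one (h0 : PowerSeries.coeff (R := R) 0 φ = 0)
    (h1 : PowerSeries.coeff (R := R) 1 φ = 0) {q : Fin 2 →₀ ℕ} (hq : q 0 ≤ 1) :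
    MvPowerSeries.coeff (R := R) q (msubst φ (fun _ : Unit => MvPowerSeries.X 0)) = 0 := by
  rw [coeff_msubst_X_single]
  split_ifs with h
  · have : q 0 = 0 ∨ q 0 = 1 := by omega
    rcases this with h' | h' <;> rw [h']
    · exact h0
    · exact h1
  · rfl

lemma coeff_v_zero_of_fst_ne {q : Fin 2 →₀ ℕ} (hq : q 0 ≠ 0) :
    MvPowerSeries.coeff (R := R) q (msubst φ (fun _ : Unit => MvPowerSeries.X 1)) = 0 := by
  rw [coeff_msubst_X_single]
  split_ifs with h
  · exfalso
    apply hq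
    have := DFunLike.congr_fun h 0
    simpa using this
  · rfl

lemma coeff_v_pow_vanish : ∀ (b : ℕ) {e : Fin 2 →₀ ℕ}, e 0 ≠ 0 →
    MvPowerSeries.coeff (R := R) e ((msubst φ (fun _ : Unit => MvPowerSeries.X 1)) ^ b) = 0 := by
  intro b
  induction b with
  | zero =>
    intro e he
    classical
    rw [pow_zero, MvPowerSeries.coeff_one, if_neg]
    intro hc
    apply he
    rw [hc]
    rfl
  | succ b ih =>
    intro e he
    rw [pow_succ', MvPowerSeries.coeff_mul]
    refine Finset.sum_eq_zero fun qr hqr => ?_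
    rw [Finset.HasAntidiagonal.mem_antidiagonal] at hqr
    have h0 := DFunLike.congr_fun hqr 0
    rw [Finsupp.add_apply] at h0
    by_cases hq : qr.1 0 = 0
    · have hr : qr.2 0 ≠ 0 := by omega
      rw [ih hr, mul_zero]
    · rw [coeff_v_zero_of_fst_ne hq, zero_mul]

lemma coeff_dj_uv (h0 : PowerSeries.coeff (R := R) 0 φ = 0) (h1 : PowerSeries.coeff (R := R) 1 φ = 0)
    (a b j : ℕ) :
    MvPowerSeries.coeff (R := R) (dj j)
      ((msubst φ (fun _ : Unit => MvPowerSeries.X 0)) ^ a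
        * (msubst φ (fun _ : Unit => MvPowerSeries.X 1)) ^ b) = 0 := by
  cases a with
  | zero =>
    rw [pow_zero, one_mul]
    exact coeff_v_pow_vanish b (by simp)
  | succ a =>
    rw [pow_succ', mul_assoc, MvPowerSeries.coeff_mul]
    refine Finset.sum_eq_zero fun qr hqr => ?_
    rw [Finset.HasAntidiagonal.mem_antidiagonal] at hqr
    have hq0 := DFunLike.congr_fun hqr 0
    rw [Finsupp.add_apply, dj_apply0] at hq0
    have hq : qr.1 0 ≤ 1 := by omega
    rw [coeff_u_zero_of_le_one h0 h1 hq, zero_mul]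

lemma coeff_dj_rhs (h0 : PowerSeries.coeff (R := R) 0 φ = 0) (h1 : PowerSeries.coeff (R := R) 1 φ = 0)
    (Γ : MvPowerSeries (Fin 2) R) (j : ℕ) :
    MvPowerSeries.coeff (R := R) (dj j)
      (msubst Γ ![msubst φ (fun _ : Unit => MvPowerSeries.X 0),
        msubst φ (fun _ : Unit => MvPowerSeries.X 1)]) = 0 := by
  classical
  have ha : ∀ i : Fin 2, constantCoeff (σ := (Fin 2)) (R := R)
      (![msubst φ (fun _ : Unit => MvPowerSeries.X 0),
        msubst φ (fun _ : Unit => MvPowerSeries.X 1)] i) = 0 := by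
    intro i
    fin_cases i
    · simp only [Matrix.cons_val_zero]
      exact constantCoeff_uv 0 h0
    · simp only [Matrix.cons_val_one, Matrix.head_cons]
      exact constantCoeff_uv 1 h0
  have h := msubst_eqTo ha Γ (Nat.lt_succ_self (dsum (dj j))) (dj j) le_rfl
  rw [h, MvPolynomial.aeval_def, MvPolynomial.eval₂_eq', map_sum]
  refine Finset.sum_eq_zero fun m _ => ?_
  rw [algebraMap_eq_C, coeff_C_mul, Fin.prod_univ_two]
  simp only [Matrix.cons_val_zero, Matrix.cons_val_one, Matrix.head_cons]
  rw [coeff_dj_uv h0 h1, mul_zero]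

end uv

lemma deriv_vanish {k : Type*} [Field k] (p : ℕ) [Fact p.Prime] [CharP k p]
    {F Γ : MvPowerSeries (Fin 2) k} (hF0 : MvPowerSeries.coeff (R := k) 0 F = 0)
    (hFX : MvPowerSeries.coeff (R := k) (Finsupp.single 0 1) F = 1)
    (hFY : MvPowerSeries.coeff (R := k) (Finsupp.single 1 1) F = 1)
    {φ : PowerSeries k} (h0 : PowerSeries.coeff (R := k) 0 φ = 0)
    (h1 : PowerSeries.coeff (R := k) 1 φ = 0)
    (hhom : msubst φ (fun _ : Unit => F)
      = msubst Γ ![msubst φ (fun _ : Unit => MvPowerSeries.X 0),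
          msubst φ (fun _ : Unit => MvPowerSeries.X 1)]) :
    ∀ n : ℕ, ¬ p ∣ n → PowerSeries.coeff (R := k) n φ = 0 := by
  have hFcc : constantCoeff (σ := (Fin 2)) (R := k) F = 0 := by
    rw [← MvPowerSeries.coeff_zero_eq_constantCoeff]; exact hF0
  have main : ∀ n : ℕ, (n : k) * PowerSeries.coeff (R := k) n φ = 0 := by
    intro n
    induction n using Nat.strong_induction_on with
    | _ n IH =>
      rcases Nat.eq_zero_or_pos n with rfl | hn
      · rw [Nat.cast_zero, zero_mul]
      · have hj : dj (n - 1) = dj (n - 1) := rfl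
        have hd : dsum (dj (n - 1)) = n := by rw [dsum_dj]; omega
        have E : MvPowerSeries.coeff (R := k) (dj (n - 1)) (msubst φ (fun _ : Unit => F)) = 0 := by
          rw [hhom]; exact coeff_dj_rhs h0 h1 Γ (n - 1)
        rw [coeff_msubst_unit hFcc, hd] at E
        have hterm : ∀ m : ℕ,
            PowerSeries.coeff (R := k) m φ * MvPowerSeries.coeff (R := k) (dj (n - 1)) (F ^ m)
            = ((m : k) * PowerSeries.coeff (R := k) m φ)
                * PowerSeries.coeff (R := k) (n - 1) (pO F ^ (m - 1) * pI F) := by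
          intro m; rw [coeff_xy_pow]; ring
        rw [Finset.sum_congr rfl fun m _ => hterm m] at E
        rw [Finset.sum_eq_single n] at E
        · have hA0 : PowerSeries.coeff (R := k) 0 (pO F) = 0 := by
            rw [coeff_pO]
            have hz : (Finsupp.single (1 : Fin 2) 0 : Fin 2 →₀ ℕ) = 0 := by simp
            rw [hz]; exact hF0
          have hlead : PowerSeries.coeff (R := k) (n - 1) (pO F ^ (n - 1) * pI F) = 1 := by
            rw [coeff_lead_mul hA0 (n - 1), coeff_pO, hFY, one_pow, one_mul, coeff_pI]
            have hdj0 : dj 0 = Finsupp.single 0 1 := by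
              rw [dj]
              have : (Finsupp.single (1 : Fin 2) 0 : Fin 2 →₀ ℕ) = 0 := by simp
              rw [this, add_zero]
            rw [hdj0, hFX]
          rw [hlead, mul_one] at E
          exact E
        · intro m hm hne
          rw [Finset.mem_range] at hm
          rw [IH m (by omega), zero_mul]
        · intro habs
          exfalso; apply habs
          rw [Finset.mem_range]; omega
  intro n hn
  have hne : (n : k) ≠ 0 := by
    rw [Ne, CharP.cast_eq_zero_iff k p n]; exact hn
  rcases mul_eq_zero.1 (main n) with h | h
  · exact absurd h hne
  · exact h

end Aux


/-- Let `k` be a field of characteristic `p > 0`, `F` and `G` formal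
group laws over `k`, and `φ ∈ t·k[[t]]` a nonzero homomorphism from `F` to `G`
(`φ(F(x,y)) = G(φ(x),φ(y))`) with `φ'(0) = 0`.  Then there is `ψ ∈ t·k[[t]]` with
`φ(t) = ψ(t^p)`, and `ψ` is a homomorphism from the Frobenius twist `F^{(p)}`
(coefficientwise `p`-th powers) to `G`. -/
theorem hom_of_fgl_with_zero_derivative_factors_through_frobenius
    {k : Type*} [Field k] (p : ℕ) [Fact p.Prime] [CharP k p]
    (Φ Γ : FormalGroupLaw k) (φ : PowerSeries k)
    (hφ0 : PowerSeries.coeff 0 φ = 0)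
    (hhom : msubst φ (fun _ : Unit => Φ.F)
      = msubst Γ.F ![msubst φ (fun _ : Unit => (MvPowerSeries.X 0 : MvPowerSeries (Fin 2) k)),
          msubst φ (fun _ : Unit => (MvPowerSeries.X 1 : MvPowerSeries (Fin 2) k))])
    (hne : φ ≠ 0) (hφ1 : PowerSeries.coeff 1 φ = 0) :
    ∃ ψ : PowerSeries k,
      PowerSeries.coeff 0 ψ = 0 ∧
      φ = msubst ψ (fun _ : Unit => (PowerSeries.X : PowerSeries k) ^ p) ∧
      msubst ψ (fun _ : Unit => MvPowerSeries.map (frobenius k p) Φ.F)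
        = msubst Γ.F ![msubst ψ (fun _ : Unit => (MvPowerSeries.X 0 : MvPowerSeries (Fin 2) k)),
            msubst ψ (fun _ : Unit => (MvPowerSeries.X 1 : MvPowerSeries (Fin 2) k))] := by
  classical
  have hp : 0 < p := (Fact.out (p := p.Prime)).pos
  have hFcc : MvPowerSeries.constantCoeff (σ := (Fin 2)) (R := k) Φ.F = 0 := by
    rw [← MvPowerSeries.coeff_zero_eq_constantCoeff]; exact Φ.coeff_zero
  -- Step 1: all coefficients of φ at indices not divisible by p vanish
  have hvan : ∀ n : ℕ, ¬ p ∣ n → PowerSeries.coeff (R := k) n φ = 0 :=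
    Aux.deriv_vanish p Φ.coeff_zero Φ.coeff_X Φ.coeff_Y hφ0 hφ1 hhom
  -- Step 2: build ψ
  set ψ : PowerSeries k := PowerSeries.mk fun n => PowerSeries.coeff (R := k) (p * n) φ with hψdef
  have hψ0 : PowerSeries.coeff (R := k) 0 ψ = 0 := by
    rw [hψdef, PowerSeries.coeff_mk, Nat.mul_zero]; exact hφ0
  have hfun : (fun _ : Unit => (PowerSeries.X : PowerSeries k) ^ p)
      = fun i : Unit => (MvPowerSeries.X i : MvPowerSeries Unit k) ^ p := by
    funext i; rfl
  -- Step 3 : φ = ψ(t^p)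
  have hfactor' : φ = msubst ψ (fun i : Unit => (MvPowerSeries.X i : MvPowerSeries Unit k) ^ p) := by
    apply MvPowerSeries.ext
    intro d
    by_cases hdvd : p ∣ d ()
    · obtain ⟨e, he⟩ := hdvd
      have hde2 : (p • Finsupp.single () e : Unit →₀ ℕ) = Finsupp.single () (p * e) := by
        rw [Finsupp.smul_single, smul_eq_mul]
      have hde : d = p • Finsupp.single () e := by
        rw [hde2, ← he]
        exact Aux.unit_finsupp_eq d
      rw [hde, Aux.coeff_msubst_dil_smul hp ψ (Finsupp.single () e), hde2]
      show PowerSeries.coeff (R := k) (p * e) φ = PowerSeries.coeff (R := k) e ψ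
      rw [hψdef, PowerSeries.coeff_mk]
    · rw [Aux.coeff_msubst_dil_not_dvd hp ψ d (fun h => hdvd (h ()))]
      conv_lhs => rw [Aux.unit_finsupp_eq d]
      exact hvan (d ()) hdvd
  have hfactor : φ = msubst ψ (fun _ : Unit => (PowerSeries.X : PowerSeries k) ^ p) := by
    rw [hfun]; exact hfactor'
  refine ⟨ψ, hψ0, hfactor, ?_⟩
  -- Step 4 : ψ is a homomorphism from the Frobenius twist
  have hXpU : ∀ i : Unit,
      MvPowerSeries.constantCoeff (σ := Unit) (R := k) ((MvPowerSeries.X i : MvPowerSeries Unit k) ^ p) = 0 :=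
    fun i => Aux.constantCoeff_X_pow hp i
  have hXp2 : ∀ i : Fin 2,
      MvPowerSeries.constantCoeff (σ := (Fin 2)) (R := k)
        ((MvPowerSeries.X i : MvPowerSeries (Fin 2) k) ^ p) = 0 :=
    fun i => Aux.constantCoeff_X_pow hp i
  have hFpcc : ∀ _ : Unit, MvPowerSeries.constantCoeff (σ := (Fin 2)) (R := k)
      (MvPowerSeries.map (σ := (Fin 2)) (frobenius k p) Φ.F) = 0 := fun _ => by
    rw [MvPowerSeries.constantCoeff_map, hFcc, map_zero]
  -- the φ-chain
  have hphiF : msubst φ (fun _ : Unit => Φ.F) = msubst ψ (fun _ : Unit => Φ.F ^ p) := by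
    conv_lhs => rw [hfactor, hfun]
    rw [Aux.msubst_comp hXpU (fun _ : Unit => hFcc) ψ]
    refine congrArg (fun a => msubst ψ a) ?_
    funext i
    rw [Aux.msubst_pow (fun _ : Unit => hFcc), Aux.msubst_X (fun _ : Unit => hFcc)]
  have huj : ∀ j : Fin 2,
      msubst φ (fun _ : Unit => (MvPowerSeries.X j : MvPowerSeries (Fin 2) k))
        = msubst ψ (fun _ : Unit => (MvPowerSeries.X j : MvPowerSeries (Fin 2) k) ^ p) := by
    intro j
    conv_lhs => rw [hfactor, hfun]
    rw [Aux.msubst_comp hXpU (fun _ : Unit => MvPowerSeries.constantCoeff_X j) ψ]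
    refine congrArg (fun a => msubst ψ a) ?_
    funext i
    rw [Aux.msubst_pow (fun _ : Unit => MvPowerSeries.constantCoeff_X j),
      Aux.msubst_X (fun _ : Unit => MvPowerSeries.constantCoeff_X j)]
  -- dilation is injective
  apply Aux.msubst_dil_injective hp (p := p)
    (s := msubst ψ (fun _ : Unit => MvPowerSeries.map (σ := (Fin 2)) (frobenius k p) Φ.F))
  -- LHS after dilation
  have hL : msubst (msubst ψ (fun _ : Unit => MvPowerSeries.map (σ := (Fin 2)) (frobenius k p) Φ.F))
        (fun i => MvPowerSeries.X i ^ p)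
      = msubst ψ (fun _ : Unit => Φ.F ^ p) := by
    rw [Aux.msubst_comp hFpcc hXp2 ψ]
    refine congrArg (fun a => msubst ψ a) ?_
    funext i
    exact Aux.msubst_frob p Φ.F
  -- RHS after dilation
  have hψj : ∀ j : Fin 2, MvPowerSeries.constantCoeff (σ := (Fin 2)) (R := k)
      (msubst ψ (fun _ : Unit => (MvPowerSeries.X j : MvPowerSeries (Fin 2) k))) = 0 := by
    intro j
    rw [Aux.constantCoeff_msubst (fun _ : Unit => MvPowerSeries.constantCoeff_X j),
      Aux.ps_constantCoeff_eq]
    exact hψ0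
  have ha : ∀ i : Fin 2, MvPowerSeries.constantCoeff (σ := (Fin 2)) (R := k)
      (![msubst ψ (fun _ : Unit => (MvPowerSeries.X 0 : MvPowerSeries (Fin 2) k)),
        msubst ψ (fun _ : Unit => (MvPowerSeries.X 1 : MvPowerSeries (Fin 2) k))] i) = 0 := by
    intro i
    fin_cases i
    · simp only [Matrix.cons_val_zero]; exact hψj 0
    · simp only [Matrix.cons_val_one, Matrix.head_cons]; exact hψj 1
  have hR : msubst (msubst Γ.F
        ![msubst ψ (fun _ : Unit => (MvPowerSeries.X 0 : MvPowerSeries (Fin 2) k)),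
          msubst ψ (fun _ : Unit => (MvPowerSeries.X 1 : MvPowerSeries (Fin 2) k))])
        (fun i => MvPowerSeries.X i ^ p)
      = msubst Γ.F
        ![msubst φ (fun _ : Unit => (MvPowerSeries.X 0 : MvPowerSeries (Fin 2) k)),
          msubst φ (fun _ : Unit => (MvPowerSeries.X 1 : MvPowerSeries (Fin 2) k))] := by
    rw [Aux.msubst_comp ha hXp2 Γ.F]
    refine congrArg (fun a => msubst Γ.F a) ?_
    funext i
    fin_cases i
    · show msubst (msubst ψ (fun _ : Unit => (MvPowerSeries.X 0 : MvPowerSeries (Fin 2) k)))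
        (fun i => MvPowerSeries.X i ^ p) = _
      rw [Aux.msubst_comp (fun _ : Unit => MvPowerSeries.constantCoeff_X 0) hXp2 ψ]
      rw [huj 0]
      refine congrArg (fun a => msubst ψ a) ?_
      funext i
      rw [Aux.msubst_X hXp2 0]
    · show msubst (msubst ψ (fun _ : Unit => (MvPowerSeries.X 1 : MvPowerSeries (Fin 2) k)))
        (fun i => MvPowerSeries.X i ^ p) = _
      rw [Aux.msubst_comp (fun _ : Unit => MvPowerSeries.constantCoeff_X 1) hXp2 ψ]
      rw [huj 1]
      refine congrArg (fun a => msubst ψ a) ?_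
      funext i
      rw [Aux.msubst_X hXp2 1]
  rw [hL, hR, ← hhom, hphiF]
end
end
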